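/- Let r, μ ∈ ℝ, σ ≠ 0, γ > 0 with γ ≠ 1, α ∉ {0,1} with α/(1−γ) > 0, 0 ≤ λ ≤ 1, and ρ₁ ≥ ρ₂. Suppose (θ₁, θ₂) is a positive solution of the Epstein–Zin equilibrium ODE system (M-HJB) on [t₀,T], where 0 ≤ t₀ < T. Then θ₁(t) ≤ θ₂(t) for every t ∈ [t₀,T]. -/

import Mathlib

noncomputable section

/-- `S(t) = λ θ₁(t) + (1-λ) θ₂(t)`. -/
def mhjbS (lam : ℝ) (θ₁ θ₂ : ℝ → ℝ) (t : ℝ) : ℝ :=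
  lam * θ₁ t + (1 - lam) * θ₂ t

/-- `D(t) = λ θ₁(t)^β + (1-λ) θ₂(t)^β` with `β = (1-γ-α)/(1-γ)` (real powers). -/
def mhjbD (γ α lam : ℝ) (θ₁ θ₂ : ℝ → ℝ) (t : ℝ) : ℝ :=
  lam * θ₁ t ^ ((1 - γ - α) / (1 - γ)) + (1 - lam) * θ₂ t ^ ((1 - γ - α) / (1 - γ))

/-- `C(t) = S(t)^{1/(α-1)} D(t)^{-1/(α-1)}` (real powers). -/
def mhjbC (γ α lam : ℝ) (θ₁ θ₂ : ℝ → ℝ) (t : ℝ) : ℝ :=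
  mhjbS lam θ₁ θ₂ t ^ ((1 : ℝ) / (α - 1)) * mhjbD γ α lam θ₁ θ₂ t ^ (-((1 : ℝ) / (α - 1)))

/-- A positive solution of the Epstein–Zin equilibrium ODE system (M-HJB) on `[t₀, T]`:
differentiable positive functions `θ₁, θ₂` with continuous derivatives `θ₁', θ₂'` such that,
for `i = 1, 2` and all `t ∈ [t₀, T]`,
`θᵢ'(t) + (1-γ)θᵢ(t)[r + (μ-r)²/(2γσ²) - C(t)] - (1-γ)ρᵢ α⁻¹ θᵢ(t)
  + α⁻¹(1-γ) θᵢ(t)^β S(t)^{α/(α-1)} D(t)^{-α/(α-1)} = 0`,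
with terminal conditions `θ₁(T) = θ₂(T) = 1`. -/
def IsMHJBSolution (r μ σ ρ₁ ρ₂ γ α lam t₀ T : ℝ) (θ₁ θ₂ : ℝ → ℝ) : Prop :=
  ∃ θ₁' θ₂' : ℝ → ℝ,
    ContinuousOn θ₁' (Set.Icc t₀ T) ∧ ContinuousOn θ₂' (Set.Icc t₀ T) ∧
    (∀ t ∈ Set.Icc t₀ T, HasDerivWithinAt θ₁ (θ₁' t) (Set.Icc t₀ T) t) ∧
    (∀ t ∈ Set.Icc t₀ T, HasDerivWithinAt θ₂ (θ₂' t) (Set.Icc t₀ T) t) ∧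
    (∀ t ∈ Set.Icc t₀ T, 0 < θ₁ t) ∧ (∀ t ∈ Set.Icc t₀ T, 0 < θ₂ t) ∧
    θ₁ T = 1 ∧ θ₂ T = 1 ∧
    (∀ t ∈ Set.Icc t₀ T,
      θ₁' t
        + (1 - γ) * θ₁ t * (r + (μ - r) ^ 2 / (2 * γ * σ ^ 2) - mhjbC γ α lam θ₁ θ₂ t)
        - (1 - γ) * ρ₁ * α⁻¹ * θ₁ t
        + α⁻¹ * (1 - γ) * θ₁ t ^ ((1 - γ - α) / (1 - γ))
          * mhjbS lam θ₁ θ₂ t ^ (α / (α - 1))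
          * mhjbD γ α lam θ₁ θ₂ t ^ (-(α / (α - 1))) = 0) ∧
    (∀ t ∈ Set.Icc t₀ T,
      θ₂' t
        + (1 - γ) * θ₂ t * (r + (μ - r) ^ 2 / (2 * γ * σ ^ 2) - mhjbC γ α lam θ₁ θ₂ t)
        - (1 - γ) * ρ₂ * α⁻¹ * θ₂ t
        + α⁻¹ * (1 - γ) * θ₂ t ^ ((1 - γ - α) / (1 - γ))
          * mhjbS lam θ₁ θ₂ t ^ (α / (α - 1))
          * mhjbD γ α lam θ₁ θ₂ t ^ (-(α / (α - 1))) = 0)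

end

lemma convex_comb_pos {lam a b : ℝ} (h0 : 0 ≤ lam) (h1 : lam ≤ 1) (ha : 0 < a) (hb : 0 < b) :
    0 < lam * a + (1 - lam) * b := by
  rcases le_total a b with h | h
  · nlinarith
  · nlinarith

/-- Proposition of Section 5.2, comparison step: for a positive solution of (M-HJB)
with `ρ₁ ≥ ρ₂`, one has `θ₁ ≤ θ₂` on `[t₀, T]`. -/
theorem statement8 (r μ σ ρ₁ ρ₂ γ α lam t₀ T : ℝ)
    (hσ : σ ≠ 0) (hγ : 0 < γ) (hγ1 : γ ≠ 1) (hα0 : α ≠ 0) (hα1 : α ≠ 1)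
    (hαγ : 0 < α / (1 - γ)) (hl0 : 0 ≤ lam) (hl1 : lam ≤ 1) (hρ : ρ₂ ≤ ρ₁)
    (ht₀ : 0 ≤ t₀) (ht₀T : t₀ < T) (θ₁ θ₂ : ℝ → ℝ)
    (hsol : IsMHJBSolution r μ σ ρ₁ ρ₂ γ α lam t₀ T θ₁ θ₂) :
    ∀ t ∈ Set.Icc t₀ T, θ₁ t ≤ θ₂ t := by
  obtain ⟨θ₁', θ₂', _, _, hd1, hd2, hp1, hp2, hT1, hT2, heq1, heq2⟩ := hsol
  have hγ1' : (1 : ℝ) - γ ≠ 0 := sub_ne_zero.mpr (fun h => hγ1 (by linarith [h.symm]))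
  have hc : 0 < (1 - γ) / α := by
    rcases div_pos_iff.mp hαγ with ⟨h1, h2⟩ | ⟨h1, h2⟩
    · exact div_pos h2 h1
    · exact div_pos_of_neg_of_neg h2 h1
  set β : ℝ := (1 - γ - α) / (1 - γ) with hβ
  have hβ1 : β - 1 = -(α / (1 - γ)) := by
    field_simp [hβ]
    rw [hβ, sub_mul, div_mul_cancel₀ _ hγ1']
    ring
  -- log difference and its derivative
  set h : ℝ → ℝ := fun t => Real.log (θ₁ t) - Real.log (θ₂ t) with hh
  set h' : ℝ → ℝ := fun t => (θ₁ t)⁻¹ * θ₁' t - (θ₂ t)⁻¹ * θ₂' t with hh'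
  have hval : ∀ z, h z = Real.log (θ₁ z) - Real.log (θ₂ z) := fun z => rfl
  have hval' : ∀ z, h' z = (θ₁ z)⁻¹ * θ₁' z - (θ₂ z)⁻¹ * θ₂' z := fun z => rfl
  have hdh : ∀ t ∈ Set.Icc t₀ T, HasDerivWithinAt h (h' t) (Set.Icc t₀ T) t := by
    intro t ht
    exact ((Real.hasDerivAt_log (hp1 t ht).ne').comp_hasDerivWithinAt t (hd1 t ht)).sub
      ((Real.hasDerivAt_log (hp2 t ht).ne').comp_hasDerivWithinAt t (hd2 t ht))
  have hch : ContinuousOn h (Set.Icc t₀ T) := fun t ht => (hdh t ht).continuousWithinAt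
  -- key sign lemma
  have key : ∀ t ∈ Set.Icc t₀ T, θ₂ t ≤ θ₁ t → 0 ≤ h' t := by
    intro t ht hba
    have ha := hp1 t ht
    have hb := hp2 t ht
    have hS : 0 < mhjbS lam θ₁ θ₂ t := convex_comb_pos hl0 hl1 ha hb
    have hD : 0 < mhjbD γ α lam θ₁ θ₂ t :=
      convex_comb_pos hl0 hl1 (Real.rpow_pos_of_pos ha _) (Real.rpow_pos_of_pos hb _)
    have h1t := heq1 t ht
    have h2t := heq2 t ht
    set P : ℝ := mhjbS lam θ₁ θ₂ t ^ (α / (α - 1)) with hP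
    set Q : ℝ := mhjbD γ α lam θ₁ θ₂ t ^ (-(α / (α - 1))) with hQ
    set K : ℝ := r + (μ - r) ^ 2 / (2 * γ * σ ^ 2) - mhjbC γ α lam θ₁ θ₂ t with hK
    have hEpos : 0 < P * Q :=
      mul_pos (Real.rpow_pos_of_pos hS _) (Real.rpow_pos_of_pos hD _)
    have e1 : θ₁' t = (1 - γ) * ρ₁ * α⁻¹ * θ₁ t - (1 - γ) * θ₁ t * K
        - α⁻¹ * (1 - γ) * θ₁ t ^ β * P * Q := by linarith
    have e2 : θ₂' t = (1 - γ) * ρ₂ * α⁻¹ * θ₂ t - (1 - γ) * θ₂ t * K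
        - α⁻¹ * (1 - γ) * θ₂ t ^ β * P * Q := by linarith
    have hmono : θ₁ t ^ (β - 1) ≤ θ₂ t ^ (β - 1) :=
      Real.rpow_le_rpow_of_nonpos hb hba (by rw [hβ1]; linarith)
    have hcalc : h' t = (1 - γ) / α * (ρ₁ - ρ₂)
        + (1 - γ) / α * (P * Q) * (θ₂ t ^ (β - 1) - θ₁ t ^ (β - 1)) := by
      rw [hval', e1, e2, Real.rpow_sub_one ha.ne' β, Real.rpow_sub_one hb.ne' β]
      field_simp
      ring
    rw [hcalc]
    have h1 : 0 ≤ (1 - γ) / α * (ρ₁ - ρ₂) := mul_nonneg hc.le (by linarith)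
    have h2 : 0 ≤ (1 - γ) / α * (P * Q) * (θ₂ t ^ (β - 1) - θ₁ t ^ (β - 1)) :=
      mul_nonneg (mul_nonneg hc.le hEpos.le) (by linarith)
    linarith
  -- main argument
  intro s hs
  by_contra hcon
  push_neg at hcon
  have hcpos : 0 < h s := by
    rw [hval s]
    have := Real.log_lt_log (hp2 s hs) hcon
    linarith
  set c : ℝ := h s with hcdef
  have hsub : Set.Icc s T ⊆ Set.Icc t₀ T := Set.Icc_subset_Icc hs.1 le_rfl
  have main : Set.Icc s T ⊆ {t | c ≤ h t} := by
    apply IsClosed.Icc_subset_of_forall_exists_gt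
    · have heqset : {t | c ≤ h t} ∩ Set.Icc s T = Set.Icc s T ∩ h ⁻¹' (Set.Ici c) := by
        ext z; simp [and_comm, Set.mem_preimage]
      rw [heqset]
      exact (hch.mono hsub).preimage_isClosed_of_isClosed isClosed_Icc isClosed_Ici
    · exact Set.mem_setOf_eq ▸ le_rfl
    · rintro x ⟨hxc, hx⟩ y hy
      have hxc' : c ≤ h x := hxc
      have hxI : x ∈ Set.Icc t₀ T := ⟨hs.1.trans hx.1, hx.2.le⟩
      have hhx : 0 < h x := lt_of_lt_of_le hcpos hxc'
      have hmem : h ⁻¹' Set.Ioi 0 ∈ nhdsWithin x (Set.Icc t₀ T) :=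
        (hch x hxI) (Ioi_mem_nhds hhx)
      rw [Metric.mem_nhdsWithin_iff] at hmem
      obtain ⟨δ, hδ, hball⟩ := hmem
      set u : ℝ := min y (min T (x + δ / 2)) with hu
      have hxu : x < u := by
        apply lt_min hy
        exact lt_min hx.2 (by linarith)
      have huT : u ≤ T := (min_le_right _ _).trans (min_le_left _ _)
      have hud : u ≤ x + δ / 2 := (min_le_right _ _).trans (min_le_right _ _)
      have hsubu : Set.Icc x u ⊆ Set.Icc t₀ T := Set.Icc_subset_Icc hxI.1 huT
      have hposu : ∀ z ∈ Set.Icc x u, 0 < h z := by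
        intro z hz
        have hzb : z ∈ Metric.ball x δ := by
          rw [Metric.mem_ball, Real.dist_eq, abs_sub_lt_iff]
          constructor <;> [linarith [hz.2]; linarith [hz.1]]
        exact hball ⟨hzb, hsubu hz⟩
      have hmonoI : MonotoneOn h (Set.Icc x u) := by
        apply monotoneOn_of_hasDerivWithinAt_nonneg (convex_Icc x u) (hch.mono hsubu)
          (f' := h')
        · intro z hz
          exact (hdh z (hsubu (interior_subset hz))).mono (interior_subset.trans hsubu)
        · intro z hz
          rw [interior_Icc] at hz
          have hzI := hsubu (Set.Ioo_subset_Icc_self hz)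
          apply key z hzI
          have hz0 : 0 < h z := hposu z (Set.Ioo_subset_Icc_self hz)
          rw [hval z] at hz0
          have hlt : Real.log (θ₂ z) < Real.log (θ₁ z) := by linarith
          exact ((Real.log_lt_log_iff (hp2 z hzI) (hp1 z hzI)).mp hlt).le
      refine ⟨u, ?_, hxu, min_le_left _ _⟩
      exact le_trans hxc' (hmonoI ⟨le_rfl, hxu.le⟩ ⟨hxu.le, le_rfl⟩ hxu.le)
  have hT : c ≤ h T := main ⟨hs.2, le_rfl⟩
  rw [hval T, hT1, hT2] at hT
  simp at hT
  linarith
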